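/- Let f be continuous on the closed unit disk {z ∈ ℂ : |z| ≤ 1}, holomorphic on the open unit disk, with f having no zeros in the open unit disk and f(0) ≠ 0. Then f(e^{iθ}) ≠ 0 for almost every θ ∈ [-π, π) with respect to Lebesgue measure. -/

import Mathlib

open Complex MeasureTheory Metric Set Filter
open scoped Real NNReal ENNReal Topology


/-- Existence of a holomorphic logarithm of a nonvanishing holomorphic function on a ball. -/
lemma exists_hol_log (f : ℂ → ℂ) (hd : DifferentiableOn ℂ f (ball 0 1))
    (hnz : ∀ z ∈ ball (0:ℂ) 1, f z ≠ 0) (h0 : f 0 ≠ 0) {R : ℝ} (hR0 : 0 < R) (hR1 : R < 1) :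
    ∃ G : ℂ → ℂ, DifferentiableOn ℂ G (ball 0 R) ∧
      ∀ z ∈ ball (0:ℂ) R, Complex.exp (G z) = f z := by
  have hsub : ball (0:ℂ) R ⊆ ball 0 1 := ball_subset_ball hR1.le
  have hA : AnalyticOnNhd ℂ f (ball 0 1) := hd.analyticOnNhd isOpen_ball
  set h : ℂ → ℂ := fun z => deriv f z / f z with hh_def
  have hh : AnalyticOnNhd ℂ h (ball 0 1) := (hA.deriv).div hA hnz
  have hhd : DifferentiableOn ℂ h (closedBall 0 R.toNNReal) := by
    refine (hh.differentiableOn).mono ?_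
    rw [Real.coe_toNNReal _ hR0.le]
    exact closedBall_subset_ball hR1
  have hRpos : (0:ℝ≥0) < R.toNNReal := by simpa using hR0
  set p := cauchyPowerSeries h 0 R.toNNReal with hp_def
  have hp : HasFPowerSeriesOnBall h p 0 R.toNNReal := hhd.hasFPowerSeriesOnBall hRpos
  set g : ℂ → ℂ := fun z => ∑' n : ℕ, (p.coeff n / (n+1)) * z^(n+1) with hg_def
  have hterm0 : ∀ n : ℕ, (p.coeff n / (n+1)) * (0:ℂ)^(n+1) = 0 := by
    intro n; simp [zero_pow (Nat.succ_ne_zero n)]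
  have hg0 : g 0 = 0 := by
    rw [hg_def]; simp only [hterm0, tsum_zero]
  have hderivterm : ∀ (n : ℕ) (y : ℂ),
      HasDerivAt (fun y => (p.coeff n / (n+1)) * y^(n+1)) (p.coeff n * y^n) y := by
    intro n y
    have := (hasDerivAt_pow (n+1) y).const_mul (p.coeff n / (n+1))
    refine this.congr_deriv ?_
    have hn1 : ((n:ℂ)+1) ≠ 0 := Nat.cast_add_one_ne_zero n
    push_cast [Nat.add_sub_cancel]
    field_simp
  have hgderiv : ∀ z ∈ ball (0:ℂ) R, HasDerivAt g (h z) z := by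
    intro z hz
    have hznorm : ‖z‖ < R := by simpa [mem_ball, dist_eq_norm] using hz
    set ρ : ℝ := (‖z‖ + R)/2 with hρ_def
    have hn0 : 0 ≤ ‖z‖ := norm_nonneg z
    have hρ0 : 0 < ρ := by positivity
    have hzρ : ‖z‖ < ρ := by rw [hρ_def]; linarith
    have hρR : ρ < R := by rw [hρ_def]; linarith
    have hsum : Summable (fun n : ℕ => ‖p.coeff n‖ * ρ^n) := by
      have hlt : (ρ.toNNReal : ℝ≥0∞) < p.radius := by
        refine lt_of_lt_of_le ?_ hp.r_le
        rw [ENNReal.coe_lt_coe]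
        exact (Real.toNNReal_lt_toNNReal_iff hR0).2 hρR
      have := p.summable_norm_mul_pow hlt
      simpa [FormalMultilinearSeries.norm_apply_eq_norm_coef,
        Real.coe_toNNReal _ hρ0.le] using this
    have hsummable0 : Summable fun n : ℕ => (p.coeff n / (n+1)) * (0:ℂ)^(n+1) := by
      simp only [hterm0]; exact summable_zero
    have key := hasDerivAt_tsum_of_isPreconnected hsum isOpen_ball
      (convex_ball (0:ℂ) ρ).isPreconnected
      (g := fun n y => (p.coeff n / (n+1)) * y^(n+1))
      (g' := fun n y => p.coeff n * y^n)
      (fun n y _ => hderivterm n y)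
      (fun n y hy => by
        have hy' : ‖y‖ < ρ := by simpa [mem_ball, dist_eq_norm] using hy
        calc ‖p.coeff n * y^n‖ = ‖p.coeff n‖ * ‖y‖^n := by
              rw [norm_mul, norm_pow]
          _ ≤ ‖p.coeff n‖ * ρ^n :=
              mul_le_mul_of_nonneg_left (pow_le_pow_left₀ (norm_nonneg _) hy'.le n)
                (norm_nonneg _))
      (mem_ball_self hρ0) hsummable0
      (by simpa [mem_ball, dist_eq_norm] using hzρ)
    have htsum : (∑' n : ℕ, p.coeff n * z^n) = h z := by
      have hz' : z ∈ Metric.eball (0:ℂ) R.toNNReal := by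
        rw [Metric.emetric_ball_nnreal]
        simpa [mem_ball, dist_eq_norm, Real.coe_toNNReal _ hR0.le] using hznorm
      have := (hp.hasSum hz').tsum_eq
      simp only [zero_add] at this
      rw [← this]
      congr 1
      funext n
      rw [FormalMultilinearSeries.apply_eq_pow_smul_coeff, smul_eq_mul, mul_comm]
    rw [← htsum]
    exact key
  -- g is a primitive of f'/f; now show f z = f 0 * exp (g z)
  have hfmul : ∀ z ∈ ball (0:ℂ) R, f z = f 0 * Complex.exp (g z) := by
    set φ : ℂ → ℂ := fun z => f z * Complex.exp (-g z) with hφ_def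
    have hφderiv : ∀ x ∈ ball (0:ℂ) R, HasDerivAt φ 0 x := by
      intro x hx
      have hx1 : x ∈ ball (0:ℂ) 1 := hsub hx
      have hfx : HasDerivAt f (deriv f x) x :=
        (hd.differentiableAt (isOpen_ball.mem_nhds hx1)).hasDerivAt
      have hgx : HasDerivAt g (h x) x := hgderiv x hx
      have hex : HasDerivAt (fun z => Complex.exp (-g z))
          (Complex.exp (-g x) * -(h x)) x := (hgx.neg).cexp
      have := hfx.mul hex
      refine this.congr_deriv ?_
      have hfx0 : f x ≠ 0 := hnz x hx1
      rw [hh_def]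
      field_simp
      ring
    have hφd : DifferentiableOn ℂ φ (ball 0 R) := fun x hx =>
      ((hφderiv x hx).differentiableAt).differentiableWithinAt
    have hconst : ∀ z ∈ ball (0:ℂ) R, φ z = φ 0 := by
      intro z hz
      refine (convex_ball (0:ℂ) R).is_const_of_fderivWithin_eq_zero hφd ?_ hz (mem_ball_self hR0)
      intro x hx
      rw [fderivWithin_of_isOpen isOpen_ball hx]
      have h1 := (hφderiv x hx).hasFDerivAt
      rw [show (ContinuousLinearMap.toSpanSingleton ℂ (0:ℂ)) = 0 by ext; simp] at h1
      exact h1.fderiv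
    intro z hz
    have := hconst z hz
    rw [hφ_def] at this
    simp only [hg0, neg_zero, Complex.exp_zero, mul_one] at this
    calc f z = f z * Complex.exp (-g z) * Complex.exp (g z) := by
          rw [mul_assoc, ← Complex.exp_add]; simp
      _ = f 0 * Complex.exp (g z) := by rw [this]
  refine ⟨fun z => Complex.log (f 0) + g z, ?_, ?_⟩
  · intro z hz
    exact (differentiableWithinAt_const _).add
      ((hgderiv z hz).differentiableAt.differentiableWithinAt)
  · intro z hz
    rw [Complex.exp_add, Complex.exp_log h0, ← hfmul z hz]

lemma log_mean_value (f : ℂ → ℂ) (hd : DifferentiableOn ℂ f (ball 0 1))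
    (hnz : ∀ z ∈ ball (0:ℂ) 1, f z ≠ 0) (h0 : f 0 ≠ 0) {r : ℝ} (hr0 : 0 < r) (hr1 : r < 1) :
    ∫ θ in (0:ℝ)..(2*π), Real.log ‖f (circleMap 0 r θ)‖ = 2*π*Real.log ‖f 0‖ := by
  set R : ℝ := (r+1)/2 with hR_def
  have hrR : r < R := by rw [hR_def]; linarith
  have hR0 : 0 < R := by rw [hR_def]; linarith
  have hR1 : R < 1 := by rw [hR_def]; linarith
  obtain ⟨G, hGd, hGexp⟩ := exists_hol_log f hd hnz h0 hR0 hR1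
  have hsub : closedBall (0:ℂ) r ⊆ ball 0 R := closedBall_subset_ball hrR
  have hDCC : DiffContOnCl ℂ G (ball 0 r) :=
    ⟨hGd.mono (ball_subset_ball hrR.le),
     (hGd.continuousOn).mono (closure_ball_subset_closedBall.trans hsub)⟩
  have hint := hDCC.circleIntegral_sub_inv_smul (w := 0) (mem_ball_self hr0)
  rw [circleIntegral] at hint
  -- integrand simplification
  have hne : ∀ θ : ℝ, circleMap 0 r θ ≠ 0 := fun θ => circleMap_ne_center hr0.ne'
  have hsimp : ∀ θ : ℝ, deriv (circleMap 0 r) θ • ((circleMap 0 r θ - 0)⁻¹ • G (circleMap 0 r θ))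
      = I * G (circleMap 0 r θ) := by
    intro θ
    rw [deriv_circleMap]
    have := hne θ
    field_simp
    rw [smul_eq_mul, smul_eq_mul, sub_zero, one_div, mul_comm _ I, mul_assoc,
      ← mul_assoc _ _⁻¹, mul_inv_cancel₀ this, one_mul]
  rw [intervalIntegral.integral_congr (fun θ _ => hsimp θ)] at hint
  rw [intervalIntegral.integral_const_mul] at hint
  have hI : (I : ℂ) ≠ 0 := I_ne_zero
  have hint2 : (∫ θ in (0:ℝ)..(2*π), G (circleMap 0 r θ)) = 2*π*(G 0) := by
    apply mul_left_cancel₀ hI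
    rw [hint]
    rw [smul_eq_mul]
    ring
  -- take real parts
  have hcont : Continuous fun θ : ℝ => G (circleMap 0 r θ) := by
    refine hGd.continuousOn.comp_continuous (continuous_circleMap 0 r) (fun θ => ?_)
    have : circleMap 0 r θ ∈ closedBall (0:ℂ) r := by
      simp [circleMap, dist_eq_norm, abs_of_pos hr0, hr0.le]
    exact hsub this
  have hre : (∫ θ in (0:ℝ)..(2*π), G (circleMap 0 r θ)).re
      = ∫ θ in (0:ℝ)..(2*π), (G (circleMap 0 r θ)).re := by
    have h2 := Complex.reCLM.intervalIntegral_comp_comm (a := (0:ℝ)) (b := 2*π)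
      (μ := volume) (hcont.intervalIntegrable _ _)
    simp only [Complex.reCLM_apply] at h2
    exact h2.symm
  have hlog : ∀ z ∈ ball (0:ℂ) R, (G z).re = Real.log ‖f z‖ := by
    intro z hz
    have : ‖f z‖ = Real.exp (G z).re := by
      rw [← hGexp z hz, Complex.norm_exp]
    rw [this, Real.log_exp]
  have hmem : ∀ θ : ℝ, circleMap 0 r θ ∈ ball (0:ℂ) R := fun θ => hsub (by
    simp [circleMap, dist_eq_norm, abs_of_pos hr0, hr0.le])
  calc ∫ θ in (0:ℝ)..(2*π), Real.log ‖f (circleMap 0 r θ)‖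
      = ∫ θ in (0:ℝ)..(2*π), (G (circleMap 0 r θ)).re :=
        intervalIntegral.integral_congr (fun θ _ => (hlog _ (hmem θ)).symm)
    _ = (∫ θ in (0:ℝ)..(2*π), G (circleMap 0 r θ)).re := hre.symm
    _ = (2*π*(G 0)).re := by rw [hint2]
    _ = 2*π*(G 0).re := by simp [Complex.mul_re]
    _ = 2*π*Real.log ‖f 0‖ := by rw [hlog 0 (mem_ball_self hR0)]

/-- If `f` is continuous on the closed unit disk, holomorphic on the open unit disk,
with no zeros in the open unit disk (in particular `f 0 ≠ 0`), then `f(e^{iθ}) ≠ 0` for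
almost every `θ ∈ [-π, π)`. -/
theorem stmt1 (f : ℂ → ℂ)
    (hc : ContinuousOn f (Metric.closedBall 0 1))
    (hd : DifferentiableOn ℂ f (Metric.ball 0 1))
    (hnz : ∀ z ∈ Metric.ball (0:ℂ) 1, f z ≠ 0)
    (h0 : f 0 ≠ 0) :
    ∀ᵐ θ : ℝ ∂(MeasureTheory.volume.restrict (Set.Ico (-Real.pi) Real.pi)),
      f (Complex.exp ((θ : ℂ) * Complex.I)) ≠ 0 := by
  obtain ⟨C, hC⟩ := (isCompact_closedBall (0:ℂ) 1).exists_bound_of_continuousOn hc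
  set M : ℝ := max C 1 with hM_def
  have hM1 : (1:ℝ) ≤ M := le_max_right _ _
  have hM0 : (0:ℝ) < M := lt_of_lt_of_le one_pos hM1
  have hMb : ∀ z ∈ closedBall (0:ℂ) 1, ‖f z‖ ≤ M := fun z hz =>
    (hC z hz).trans (le_max_left _ _)
  -- the radii
  set r : ℕ → ℝ := fun n => 1 - 1/(n+2) with hr_def
  have hr0 : ∀ n, 0 < r n := by
    intro n
    have h2 : (2:ℝ) ≤ (n:ℝ) + 2 := by
      have := Nat.cast_nonneg (α := ℝ) n
      linarith
    have : 1/((n:ℝ)+2) ≤ 1/2 := by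
      apply one_div_le_one_div_of_le <;> linarith
    simp only [hr_def]; linarith
  have hr1 : ∀ n, r n < 1 := by
    intro n
    have : 0 < 1/((n:ℝ)+2) := by positivity
    simp only [hr_def]; linarith
  have hrlim : Tendsto r atTop (𝓝 1) := by
    have h1 : Tendsto (fun n : ℕ => 1/((n:ℝ)+2)) atTop (𝓝 0) := by
      have h := (tendsto_one_div_add_atTop_nhds_zero_nat (𝕜 := ℝ)).comp (tendsto_add_atTop_nat 1)
      refine Tendsto.congr (fun n => ?_) h
      simp only [Function.comp_apply]
      push_cast
      ring
    have h2 : Tendsto (fun n : ℕ => 1 - 1/((n:ℝ)+2)) atTop (𝓝 (1-0)) :=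
      tendsto_const_nhds.sub h1
    simpa [hr_def] using h2
  -- membership facts
  have hmemb : ∀ (n : ℕ) (θ : ℝ), circleMap 0 (r n) θ ∈ ball (0:ℂ) 1 := by
    intro n θ
    have habs : ‖circleMap 0 (r n) θ‖ = |r n| := norm_circleMap_zero _ _
    simp only [mem_ball, dist_zero_right, habs, abs_of_pos (hr0 n)]
    exact hr1 n
  have hmemcb : ∀ (n : ℕ) (θ : ℝ), circleMap 0 (r n) θ ∈ closedBall (0:ℂ) 1 :=
    fun n θ => ball_subset_closedBall (hmemb n θ)
  have hfne : ∀ (n : ℕ) (θ : ℝ), f (circleMap 0 (r n) θ) ≠ 0 :=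
    fun n θ => hnz _ (hmemb n θ)
  -- the functions
  set u : ℕ → ℝ → ℝ := fun n θ => Real.log M - Real.log ‖f (circleMap 0 (r n) θ)‖ with hu_def
  set F : ℕ → ℝ → ℝ≥0∞ := fun n θ => ENNReal.ofReal (u n θ) with hF_def
  have hfc : ∀ n, Continuous fun θ => f (circleMap 0 (r n) θ) := fun n =>
    hc.comp_continuous (continuous_circleMap 0 (r n)) (hmemcb n)
  have hu_cont : ∀ n, Continuous (u n) := by
    intro n
    exact continuous_const.sub (((hfc n).norm).log
      (fun θ => norm_ne_zero_iff.2 (hfne n θ)))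
  have hu_nonneg : ∀ n θ, 0 ≤ u n θ := by
    intro n θ
    have h1 : ‖f (circleMap 0 (r n) θ)‖ ≤ M := hMb _ (hmemcb n θ)
    have h2 : 0 < ‖f (circleMap 0 (r n) θ)‖ := norm_pos_iff.2 (hfne n θ)
    have := Real.log_le_log h2 h1
    simp only [hu_def]; linarith
  set μ := volume.restrict (Ico (-π) π) with hμ_def
  have hInt : ∀ n, IntegrableOn (u n) (Ico (-π) π) volume := fun n =>
    (((hu_cont n).continuousOn).integrableOn_compact isCompact_Icc).mono_set Ico_subset_Icc_self
  -- periodicity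
  have hper : ∀ n, Function.Periodic (u n) (2*π) := by
    intro n θ
    simp only [hu_def, (periodic_circleMap 0 (r n)) θ]
  -- value of the lintegral
  set B : ℝ := 2*π*Real.log M - 2*π*Real.log ‖f 0‖ with hB_def
  have hlint : ∀ n, ∫⁻ θ, F n θ ∂μ = ENNReal.ofReal B := by
    intro n
    rw [hμ_def, hF_def]
    rw [← ofReal_integral_eq_lintegral_ofReal (hInt n)
      (ae_of_all _ (fun θ => hu_nonneg n θ))]
    congr 1
    have e1 : ∫ θ in Ico (-π) π, u n θ = ∫ θ in (-π)..π, u n θ := by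
      rw [intervalIntegral.integral_of_le (by linarith [Real.pi_pos])]
      rw [← MeasureTheory.Measure.restrict_congr_set Ico_ae_eq_Ioc]
    have e2 : ∫ θ in (-π)..π, u n θ = ∫ θ in (0:ℝ)..(2*π), u n θ := by
      have := (hper n).intervalIntegral_add_eq (-π) 0
      rw [show -π + 2*π = π by ring, show (0:ℝ) + 2*π = 2*π by ring] at this
      exact this
    rw [e1, e2]
    have e3 : ∫ θ in (0:ℝ)..(2*π), u n θ
        = (∫ _θ in (0:ℝ)..(2*π), Real.log M)
          - ∫ θ in (0:ℝ)..(2*π), Real.log ‖f (circleMap 0 (r n) θ)‖ := by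
      rw [← intervalIntegral.integral_sub intervalIntegrable_const
        ((((hfc n).norm).log (fun θ => norm_ne_zero_iff.2 (hfne n θ))).intervalIntegrable _ _)]
    rw [e3, log_mean_value f hd hnz h0 (hr0 n) (hr1 n)]
    simp only [intervalIntegral.integral_const, smul_eq_mul, hB_def]
    ring
  -- measurability
  have hFm : ∀ n, Measurable (F n) := fun n =>
    (ENNReal.continuous_ofReal.comp (hu_cont n)).measurable
  -- the zero set
  set Z : Set ℝ := {θ : ℝ | f (Complex.exp ((θ : ℂ) * Complex.I)) = 0} with hZ_def
  have hecont : Continuous fun θ : ℝ => f (Complex.exp ((θ : ℂ) * Complex.I)) := by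
    refine hc.comp_continuous ((Complex.continuous_ofReal.mul continuous_const).cexp) ?_
    intro θ
    simp [Complex.norm_exp]
  have hZm : MeasurableSet Z := (isClosed_singleton.preimage hecont).measurableSet
  -- on Z the liminf is ⊤
  have htop : ∀ θ ∈ Z, liminf (fun n => F n θ) atTop = ⊤ := by
    intro θ hθ
    refine Filter.Tendsto.liminf_eq ?_
    have h1 : Tendsto (fun n => ((r n : ℝ) : ℂ)) atTop (𝓝 1) := by
      have := (Complex.continuous_ofReal.tendsto 1).comp hrlim
      simpa [Function.comp_def] using this
    have h2 : Tendsto (fun n => circleMap 0 (r n) θ) atTop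
        (𝓝 (Complex.exp ((θ:ℂ) * Complex.I))) := by
      have := h1.mul_const (Complex.exp ((θ:ℂ) * Complex.I))
      simpa [circleMap] using this
    have hcw : ContinuousWithinAt f (closedBall 0 1) (Complex.exp ((θ:ℂ) * Complex.I)) :=
      hc _ (by simp [Complex.norm_exp])
    have h3 : Tendsto (fun n => f (circleMap 0 (r n) θ)) atTop (𝓝 0) := by
      have := hcw.tendsto.comp
        (tendsto_nhdsWithin_of_tendsto_nhds_of_eventually_within _ h2
          (Eventually.of_forall (fun n => hmemcb n θ)))
      rwa [hθ] at this
    have h4 : Tendsto (fun n => ‖f (circleMap 0 (r n) θ)‖) atTop (𝓝[>] 0) := by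
      refine tendsto_nhdsWithin_of_tendsto_nhds_of_eventually_within _ ?_
        (Eventually.of_forall (fun n => norm_pos_iff.2 (hfne n θ)))
      simpa using h3.norm
    have h5 : Tendsto (fun n => Real.log ‖f (circleMap 0 (r n) θ)‖) atTop atBot :=
      Real.tendsto_log_nhdsGT_zero.comp h4
    have h6 : Tendsto (fun n => u n θ) atTop atTop := by
      have := tendsto_atTop_add_const_left atTop (Real.log M)
        (tendsto_neg_atBot_atTop.comp h5)
      simpa [hu_def, sub_eq_add_neg] using this
    exact ENNReal.tendsto_ofReal_atTop.comp h6
  -- conclude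
  rw [ae_iff]
  simp only [ne_eq, not_not]
  by_contra hμZ
  have hμZ' : μ Z ≠ 0 := by rwa [hμ_def] at hμZ
  have hbig : (⊤:ℝ≥0∞) ≤ ∫⁻ θ, liminf (fun n => F n θ) atTop ∂μ := by
    calc (⊤:ℝ≥0∞) = ⊤ * μ Z := (ENNReal.top_mul hμZ').symm
      _ = ∫⁻ _θ in Z, ⊤ ∂μ := (setLIntegral_const Z ⊤).symm
      _ = ∫⁻ θ in Z, liminf (fun n => F n θ) atTop ∂μ :=
          setLIntegral_congr_fun hZm (fun θ hθ => (htop θ hθ).symm)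
      _ ≤ ∫⁻ θ, liminf (fun n => F n θ) atTop ∂μ := setLIntegral_le_lintegral _ _
  have hsmall : ∫⁻ θ, liminf (fun n => F n θ) atTop ∂μ ≤ ENNReal.ofReal B := by
    calc ∫⁻ θ, liminf (fun n => F n θ) atTop ∂μ
        ≤ liminf (fun n => ∫⁻ θ, F n θ ∂μ) atTop := lintegral_liminf_le hFm
      _ = ENNReal.ofReal B := by simp only [hlint]; exact liminf_const _
  have : (⊤:ℝ≥0∞) ≤ ENNReal.ofReal B := hbig.trans hsmall
  simp at this
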